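/- Fix n ≥ 1. Every factorization function supported on monic polynomials of degree n is a finite linear combination, with coefficients independent of the prime power q, of the functions ι_{(𝐦,𝐞)} = ι_{m_1,e_1} ⋆ ι_{m_2,e_2} ⋆ ⋯ ⋆ ι_{m_ℓ,e_ℓ} with m_1 e_1 + ⋯ + m_ℓ e_ℓ = n. -/

import Mathlib

open Polynomial UniqueFactorizationMonoid
open scoped Classical

noncomputable section
namespace PaperFF

/-! ### Partitions and irreducible characters of the symmetric group -/

/-- The `i`-th largest entry (0-indexed) of a multiset of naturals; `0` if out of range. -/
def partAtM (s : Multiset ℕ) (i : ℕ) : ℕ := ((s.sort (· ≤ ·)).reverse).getD i 0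

/-- The largest part `λ₁` of a partition (0 for the empty partition). -/
def maxPart {n : ℕ} (lam : Nat.Partition n) : ℕ := partAtM lam.parts 0

/-- Power sum symmetric polynomial `p_k` in `n` variables. -/
def psumP (n k : ℕ) : MvPolynomial (Fin n) ℤ := ∑ i, MvPolynomial.X i ^ k

/-- `p_ν = ∏ p_{ν_i}` for a multiset `ν` of naturals. -/
def pMult (n : ℕ) (ν : Multiset ℕ) : MvPolynomial (Fin n) ℤ := (ν.map (psumP n)).prod

/-- Vandermonde product `a_δ = ∏_{i<j} (x_i - x_j)` in `n` variables. -/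
def vand (n : ℕ) : MvPolynomial (Fin n) ℤ :=
  ∏ i : Fin n, ∏ j ∈ Finset.Ioi i, (MvPolynomial.X i - MvPolynomial.X j)

/-- The exponent vector `λ + δ` with `δ = (n-1, n-2, …, 0)`. -/
def expOfM (n : ℕ) (s : Multiset ℕ) : Fin n →₀ ℕ :=
  Finsupp.equivFunOnFinite.symm fun i => partAtM s i + (n - 1 - (i : ℕ))

/-- The irreducible character `X^λ(ν)` of the symmetric group `S_n`, where `λ` (resp. `ν`)
is given by its multiset of parts.  It is defined through the classical formula of Frobenius:
`p_ν · a_δ = ∑_λ X^λ(ν) · x^{λ+δ} + (monomials not of the form μ+δ)`, i.e. `X^λ(ν)` is the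
coefficient of the monomial `x^{λ+δ}` in `p_ν · a_δ`. -/
def XcharMM (n : ℕ) (lam ν : Multiset ℕ) : ℤ :=
  MvPolynomial.coeff (expOfM n lam) (pMult n ν * vand n)

/-- The irreducible character `X^λ(ν)` of `S_n`, with `ν` a multiset (cycle type). -/
def Xchar {n : ℕ} (lam : Nat.Partition n) (ν : Multiset ℕ) : ℤ := XcharMM n lam.parts ν

/-- The partition `(1^n)` of `n`. -/
def onesPart (n : ℕ) : Nat.Partition n :=
  ⟨Multiset.replicate n 1,
    fun {i} hi => by rw [Multiset.eq_of_mem_replicate hi]; exact one_pos,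
    by simp [Multiset.sum_replicate]⟩

/-- The hook partition `(r, 1^{n-r})` of `n` (defined when `1 ≤ r ≤ n`). -/
def hookPart (n r : ℕ) : Nat.Partition n :=
  if h : 1 ≤ r ∧ r ≤ n then
    ⟨r ::ₘ Multiset.replicate (n - r) 1,
      fun {i} hi => by
        rcases Multiset.mem_cons.mp hi with rfl | hi
        · exact h.1
        · rw [Multiset.eq_of_mem_replicate hi]; exact one_pos,
      by simp [Multiset.sum_cons, Multiset.sum_replicate]; omega⟩
  else onesPart n

/-- The partition `(λ₁, λ₂, 1^ν)` of `n`, with `ν = n - λ₁ - λ₂`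
(defined when `1 ≤ λ₂ ≤ λ₁` and `λ₁ + λ₂ ≤ n`). -/
def twoRowPart (n l1 l2 : ℕ) : Nat.Partition n :=
  if h : 1 ≤ l2 ∧ l2 ≤ l1 ∧ l1 + l2 ≤ n then
    ⟨l1 ::ₘ l2 ::ₘ Multiset.replicate (n - l1 - l2) 1,
      fun {i} hi => by
        rcases Multiset.mem_cons.mp hi with rfl | hi
        · omega
        rcases Multiset.mem_cons.mp hi with rfl | hi
        · exact h.1
        · rw [Multiset.eq_of_mem_replicate hi]; exact one_pos,
      by simp [Multiset.sum_cons, Multiset.sum_replicate]; omega⟩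
  else onesPart n

/-- The partition `(ν+2, 2^j, 1^i)` of `n`, with `ν = n - i - 2j - 2`
(defined when `i + 2j + 2 ≤ n`). -/
def nearColPart (n i j : ℕ) : Nat.Partition n :=
  if h : i + 2 * j + 2 ≤ n then
    ⟨(n - i - 2 * j) ::ₘ (Multiset.replicate j 2 + Multiset.replicate i 1),
      fun {x} hx => by
        rcases Multiset.mem_cons.mp hx with rfl | hx
        · omega
        rcases Multiset.mem_add.mp hx with hx | hx
        · rw [Multiset.eq_of_mem_replicate hx]; exact two_pos
        · rw [Multiset.eq_of_mem_replicate hx]; exact one_pos,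
      by simp [Multiset.sum_cons, Multiset.sum_replicate]; omega⟩
  else onesPart n

/-- The conjugate (transposed) partition, as a multiset of parts:
`λ'_i = #{j : λ_j ≥ i}`. -/
def conjParts (s : Multiset ℕ) : Multiset ℕ :=
  ((Finset.Icc 1 s.sum).val.map fun i => Multiset.card (s.filter fun p => i ≤ p)).filter
    (fun c => 0 < c)

/-- Cauchy's measure `𝐩(ν) = ∏_i 1/(i^{m_i} m_i!)`, the probability that a uniformly random
permutation in `S_n` has cycle type `ν`. -/
def cycP {n : ℕ} (ν : Nat.Partition n) : ℝ :=
  ∏ i ∈ Finset.range n,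
    (((i + 1 : ℕ) : ℝ) ^ (ν.parts.count (i + 1)) *
      (Nat.factorial (ν.parts.count (i + 1)) : ℝ))⁻¹

/-- The harmonic number `H_n = 1 + 1/2 + ⋯ + 1/n`. -/
def Hn (n : ℕ) : ℝ := ∑ k ∈ Finset.range n, ((k : ℝ) + 1)⁻¹

/-! ### Arithmetic in 𝔽_q[T] -/

variable (F : Type) [Field F] [Fintype F]

/-- The set of monic polynomials of degree `n`. -/
def Mn (n : ℕ) : Set (Polynomial F) := {f | f.Monic ∧ f.natDegree = n}

/-- The short interval `I(f;h) = {g monic : deg(f-g) ≤ h}`. -/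
def SI (h : ℕ) (f : Polynomial F) : Set (Polynomial F) :=
  {g | g.Monic ∧ (f - g).degree ≤ (h : ℕ)}

/-- The mean value of `η` over `M_n`. -/
def meanM (n : ℕ) (η : Polynomial F → ℂ) : ℂ :=
  ((Fintype.card F : ℂ) ^ n)⁻¹ * ∑ᶠ f ∈ Mn F n, η f

/-- The variance of `η` over `M_n`. -/
def varM (n : ℕ) (η : Polynomial F → ℂ) : ℝ :=
  ((Fintype.card F : ℝ) ^ n)⁻¹ * ∑ᶠ f ∈ Mn F n, ‖η f - meanM F n η‖ ^ 2

/-- The covariance of `η₁, η₂` over `M_n`. -/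
def covM (n : ℕ) (η₁ η₂ : Polynomial F → ℂ) : ℂ :=
  ((Fintype.card F : ℂ) ^ n)⁻¹ *
    ∑ᶠ f ∈ Mn F n, (η₁ f - meanM F n η₁) * (starRingEnd ℂ) (η₂ f - meanM F n η₂)

/-- The extended factorization type of `f`: the multiset of pairs
`(deg P, e)` over the distinct monic irreducible factors `P` of `f`, with multiplicities `e`. -/
def extType (f : Polynomial F) : Multiset (ℕ × ℕ) :=
  (normalizedFactors f).dedup.map fun P => (P.natDegree, (normalizedFactors f).count P)

/-- The factorization type `τ_f` of `f`: the multiset of degrees of its monic irreducible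
factors (with multiplicity). -/
def factType (f : Polynomial F) : Multiset ℕ := (normalizedFactors f).map natDegree

/-- `X^λ(f)` for a multiset `λ`: equals `X^λ(τ_f)` for squarefree monic `f` of degree `n`,
and `0` otherwise. -/
def XcharPolyM (n : ℕ) (lamParts : Multiset ℕ) (f : Polynomial F) : ℂ :=
  if f.Monic ∧ f.natDegree = n ∧ Squarefree f then (XcharMM n lamParts (factType F f) : ℂ)
  else 0

/-- `X^λ(f)`: equals `X^λ(τ_f)` for squarefree monic `f` of degree `n`, and `0` otherwise. -/
def XcharPoly {n : ℕ} (lam : Nat.Partition n) (f : Polynomial F) : ℂ :=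
  XcharPolyM F n lam.parts f

/-- The Möbius function of a monic polynomial. -/
def muP (f : Polynomial F) : ℂ :=
  if Squarefree f then (-1 : ℂ) ^ Multiset.card (normalizedFactors f) else 0

/-- The number of distinct monic irreducible divisors of `f`. -/
def omegaP (f : Polynomial F) : ℕ := Multiset.card (normalizedFactors f).dedup

/-- The von Mangoldt function: `Λ(f) = deg P` if `f = P^e` is a prime power, else `0`. -/
def vonM (f : Polynomial F) : ℂ :=
  if Multiset.card (normalizedFactors f).dedup = 1 then
    (((normalizedFactors f).dedup.map natDegree).sum : ℂ)
  else 0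

/-- The `k`-fold divisor function `d_k(f)`. -/
def dk (k : ℕ) (f : Polynomial F) : ℕ :=
  Nat.card {v : Fin k → Polynomial F // (∀ i, (v i).Monic) ∧ ∏ i, v i = f}

/-! ### Factorization functions -/

/-- The total degree `Σ mᵢ eᵢ` of an extended factorization type. -/
def totalDeg (t : Multiset (ℕ × ℕ)) : ℕ := (t.map fun p => p.1 * p.2).sum

/-- The extended factorization type of a squarefree polynomial of factorization type `ν`. -/
def sfType {n : ℕ} (ν : Nat.Partition n) : Multiset (ℕ × ℕ) := ν.parts.map fun d => (d, 1)

/-- The expansion ("Fourier") coefficient `â_λ = Σ_{ν⊢n} 𝐩(ν) a_ν X^λ(ν)` of a factorization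
function. -/
def fhat (n : ℕ) (a : Multiset (ℕ × ℕ) → ℂ) (lam : Nat.Partition n) : ℂ :=
  ∑ ν : Nat.Partition n, (cycP ν : ℂ) * a (sfType ν) * (Xchar lam ν.parts : ℂ)

/-! ### Dirichlet characters mod T^M -/

/-- The ring `𝔽_q[T]/(T^M)`. -/
abbrev Rq (M : ℕ) := Polynomial F ⧸ Ideal.span {(Polynomial.X : Polynomial F) ^ M}

/-- Reduction mod `T^M`. -/
def toRq (M : ℕ) : Polynomial F →+* Rq F M := Ideal.Quotient.mk _

/-- A character mod `T^M` is even if `χ(cf) = χ(f)` for all nonzero scalars `c`. -/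
def IsEvenChar {M : ℕ} (χ : MulChar (Rq F M) ℂ) : Prop :=
  ∀ c : F, c ≠ 0 → ∀ x : Rq F M, χ (toRq F M (Polynomial.C c) * x) = χ x

/-- A character mod `T^M` is primitive if it is not induced by a character of smaller
modulus `T^{M'}`, i.e. if its values on polynomials coprime to `T` do not depend only on the
residue mod `T^{M'}` for some `M' < M`. -/
def IsPrimChar {M : ℕ} (χ : MulChar (Rq F M) ℂ) : Prop :=
  ¬ ∃ M' < M, ∀ f g : Polynomial F, ¬ Polynomial.X ∣ f → ¬ Polynomial.X ∣ g →
      Polynomial.X ^ M' ∣ (f - g) → χ (toRq F M f) = χ (toRq F M g)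

/-! ### Schur polynomials -/

/-- The complete homogeneous symmetric polynomial `h_m` in `k` variables. -/
def hPoly (k m : ℕ) : MvPolynomial (Fin k) ℤ :=
  ∑ᶠ d : Fin k → ℕ, if (∑ i, d i) = m then ∏ i, MvPolynomial.X i ^ d i else 0

/-- `h_m` for integer index, `0` for negative `m`. -/
def hPolyZ (k : ℕ) (m : ℤ) : MvPolynomial (Fin k) ℤ :=
  if 0 ≤ m then hPoly k m.toNat else 0

/-- The Schur polynomial `s_λ` in `k` variables, via the Jacobi–Trudi determinant
`s_λ = det(h_{λ_i - i + j})_{i,j}`; it is `0` when `ℓ(λ) > k`. -/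
def schurP (k : ℕ) {n : ℕ} (lam : Nat.Partition n) : MvPolynomial (Fin k) ℤ :=
  if Multiset.card lam.parts ≤ k then
    Matrix.det (Matrix.of fun i j : Fin k =>
      hPolyZ k ((partAtM lam.parts i : ℤ) - (i : ℕ) + (j : ℕ)))
  else 0

/-- `s_λ(1,…,1)`, the Schur polynomial in `k` variables evaluated with all variables `1`. -/
def schurAtOnes (k : ℕ) {n : ℕ} (lam : Nat.Partition n) : ℤ :=
  MvPolynomial.eval (fun _ => (1 : ℤ)) (schurP k lam)

/-- `s_λ(Θ)` for `Θ = diag(e^{2πiθ_1},…,e^{2πiθ_N})`. -/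
def schurEval {N n : ℕ} (lam : Nat.Partition n) (θ : Fin N → ℝ) : ℂ :=
  MvPolynomial.aeval (fun j => Complex.exp (2 * Real.pi * Complex.I * (θ j))) (schurP N lam)

/-! ### Dirichlet convolution and the basis functions ι -/

/-- Dirichlet convolution on monic polynomials. -/
def conv (φ₁ φ₂ : Polynomial F → ℂ) (f : Polynomial F) : ℂ :=
  ∑ᶠ p : Polynomial F × Polynomial F,
    if p.1.Monic ∧ p.2.Monic ∧ p.1 * p.2 = f then φ₁ p.1 * φ₂ p.2 else 0

/-- `ι_{m,e}`: the indicator of `e`-th powers of monic irreducibles of degree `m`. -/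
def iota (m e : ℕ) (f : Polynomial F) : ℂ :=
  if ∃ P : Polynomial F, Irreducible P ∧ P.Monic ∧ P.natDegree = m ∧ f = P ^ e then 1 else 0

/-- `ι_{(𝐦,𝐞)} = ι_{m_1,e_1} ⋆ ⋯ ⋆ ι_{m_ℓ,e_ℓ}` for an array given as a list of pairs. -/
def iotaL (F : Type) [Field F] [Fintype F] : List (ℕ × ℕ) → Polynomial F → ℂ
  | [] => fun f => if f = 1 then 1 else 0
  | me :: rest => conv F (iota F me.1 me.2) (iotaL F rest)

/-! ### Restriction to polynomials coprime to T -/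

/-- Monic polynomials of degree `n` with nonzero constant coefficient. -/
def Mnat (n : ℕ) : Set (Polynomial F) := {f | f.Monic ∧ f.natDegree = n ∧ f.coeff 0 ≠ 0}

/-- The mean `E^♮(a;n)` over `M_n^♮`. -/
def Enat (n : ℕ) (η : Polynomial F → ℂ) : ℂ :=
  ((Nat.card (Mnat F n) : ℂ))⁻¹ * ∑ᶠ f ∈ Mnat F n, η f

/-! ### Auxiliary material for `statement13` -/

/-- Remove `e` from the multiplicity of the entry `x` of an extended factorization type. -/
def shrink (x : ℕ × ℕ) (e : ℕ) (t : Multiset (ℕ × ℕ)) : Multiset (ℕ × ℕ) :=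
  if x.2 = e then t.erase x else (x.1, x.2 - e) ::ₘ t.erase x

/-- The number of ways a polynomial of extended type `t` is counted by `iotaL L`. -/
def NN : List (ℕ × ℕ) → Multiset (ℕ × ℕ) → ℕ
  | [], t => if t = 0 then 1 else 0
  | me :: L, t =>
      ∑ x ∈ t.toFinset, if x.1 = me.1 ∧ me.2 ≤ x.2 then t.count x * NN L (shrink x me.2 t) else 0

lemma totalDeg_cons (x : ℕ × ℕ) (t : Multiset (ℕ × ℕ)) :
    totalDeg (x ::ₘ t) = x.1 * x.2 + totalDeg t := by
  simp [totalDeg, Multiset.map_cons, Multiset.sum_cons]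

lemma totalDeg_erase {x : ℕ × ℕ} {t : Multiset (ℕ × ℕ)} (hx : x ∈ t) :
    totalDeg (t.erase x) + x.1 * x.2 = totalDeg t := by
  conv_rhs => rw [← Multiset.cons_erase hx]
  rw [totalDeg_cons]; ring

lemma totalDeg_shrink {x : ℕ × ℕ} {t : Multiset (ℕ × ℕ)} {e : ℕ} (hx : x ∈ t) (he : e ≤ x.2) :
    totalDeg (shrink x e t) + x.1 * e = totalDeg t := by
  unfold shrink
  split_ifs with h
  · rw [← h]; exact totalDeg_erase hx
  · rw [totalDeg_cons]
    have h1 : x.1 * (x.2 - e) + x.1 * e = x.1 * x.2 := by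
      rw [← Nat.mul_add, Nat.sub_add_cancel he]
    have h2 := totalDeg_erase hx
    dsimp only at *
    omega

lemma card_shrink_le {x : ℕ × ℕ} {t : Multiset (ℕ × ℕ)} {e : ℕ} (hx : x ∈ t) :
    Multiset.card (shrink x e t) ≤ Multiset.card t := by
  unfold shrink
  have hpos : 1 ≤ Multiset.card t := by
    rw [← Multiset.cons_erase hx]; simp
  have hc : Multiset.card (t.erase x) + 1 = Multiset.card t := by
    rw [← Multiset.card_cons, Multiset.cons_erase hx]
  split_ifs with h
  · exact Multiset.card_erase_le
  · simp only [Multiset.card_cons]; omega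

lemma NN_totalDeg : ∀ (L : List (ℕ × ℕ)) (t : Multiset (ℕ × ℕ)), NN L t ≠ 0 →
    totalDeg t = (L.map fun p : ℕ × ℕ => p.1 * p.2).sum
  | [], t, h => by
    simp only [NN] at h
    split_ifs at h with h0
    · simp [h0, totalDeg]
    · exact absurd rfl h
  | me :: L, t, h => by
    simp only [NN] at h
    obtain ⟨x, hxmem, hx⟩ := Finset.exists_ne_zero_of_sum_ne_zero h
    rw [Multiset.mem_toFinset] at hxmem
    split_ifs at hx with hcond
    · have h2 : NN L (shrink x me.2 t) ≠ 0 := by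
        intro h0; rw [h0, Nat.mul_zero] at hx; exact hx rfl
      have := NN_totalDeg L _ h2
      have hts := totalDeg_shrink hxmem hcond.2
      simp only [List.map_cons, List.sum_cons]
      rw [hcond.1] at hts
      omega
    · exact absurd rfl hx

lemma NN_card_le : ∀ (L : List (ℕ × ℕ)) (t : Multiset (ℕ × ℕ)), NN L t ≠ 0 →
    Multiset.card t ≤ L.length
  | [], t, h => by
    simp only [NN] at h
    split_ifs at h with h0
    · simp [h0]
    · exact absurd rfl h
  | me :: L, t, h => by
    simp only [NN] at h
    obtain ⟨x, hxmem, hx⟩ := Finset.exists_ne_zero_of_sum_ne_zero h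
    rw [Multiset.mem_toFinset] at hxmem
    split_ifs at hx with hcond
    · have h2 : NN L (shrink x me.2 t) ≠ 0 := by
        intro h0; rw [h0, Nat.mul_zero] at hx; exact hx rfl
      have := NN_card_le L _ h2
      have hcs := card_shrink_le (e := me.2) hxmem
      have h1 : Multiset.card (t.erase x) + 1 = Multiset.card t := by
        rw [← Multiset.card_cons, Multiset.cons_erase hxmem]
      unfold shrink at this hcs
      split_ifs at this hcs with hv
      · simp only [List.length_cons]; omega
      · simp only [Multiset.card_cons] at this
        simp only [List.length_cons]; omega
    · exact absurd rfl hx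

lemma NN_eq_of_card : ∀ (L : List (ℕ × ℕ)) (t : Multiset (ℕ × ℕ)), NN L t ≠ 0 →
    Multiset.card t = L.length → t = ↑L
  | [], t, h, hc => by
    simpa using hc
  | me :: L, t, h, hc => by
    simp only [NN] at h
    obtain ⟨x, hxmem, hx⟩ := Finset.exists_ne_zero_of_sum_ne_zero h
    rw [Multiset.mem_toFinset] at hxmem
    split_ifs at hx with hcond
    · have h2 : NN L (shrink x me.2 t) ≠ 0 := by
        intro h0; rw [h0, Nat.mul_zero] at hx; exact hx rfl
      have h1 : Multiset.card (t.erase x) + 1 = Multiset.card t := by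
        rw [← Multiset.card_cons, Multiset.cons_erase hxmem]
      by_cases hv : x.2 = me.2
      · have hsh : shrink x me.2 t = t.erase x := if_pos hv
        rw [hsh] at h2
        have hcard : Multiset.card (t.erase x) = L.length := by
          simp only [List.length_cons] at hc; omega
        have := NN_eq_of_card L _ h2 hcard
        have hxme : x = me := Prod.ext hcond.1 hv
        rw [← hxme, ← Multiset.cons_coe, ← this, Multiset.cons_erase hxmem]
      · have hsh : shrink x me.2 t = (x.1, x.2 - me.2) ::ₘ t.erase x := if_neg hv
        rw [hsh] at h2
        have := NN_card_le L _ h2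
        simp only [Multiset.card_cons, List.length_cons] at this hc
        omega
    · exact absurd rfl hx

lemma NN_self_pos : ∀ (L : List (ℕ × ℕ)), 0 < NN L (↑L : Multiset (ℕ × ℕ))
  | [] => by simp [NN]
  | me :: L => by
    have hmem : me ∈ ((↑(me :: L) : Multiset (ℕ × ℕ))).toFinset := by
      rw [Multiset.mem_toFinset, ← Multiset.cons_coe]; exact Multiset.mem_cons_self _ _
    simp only [NN]
    apply Finset.sum_pos' (fun i _ => Nat.zero_le _)
    refine ⟨me, hmem, ?_⟩
    rw [if_pos ⟨rfl, le_refl me.2⟩]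
    have hsh : shrink me me.2 (↑(me :: L) : Multiset (ℕ × ℕ)) = ↑L := by
      unfold shrink
      rw [if_pos rfl, ← Multiset.cons_coe, Multiset.erase_cons_head]
    rw [hsh]
    have hcnt : 0 < Multiset.count me (↑(me :: L) : Multiset (ℕ × ℕ)) := by
      rw [Multiset.count_pos, ← Multiset.cons_coe]; exact Multiset.mem_cons_self _ _
    exact Nat.mul_pos hcnt (NN_self_pos L)


section PolyAux

variable {F : Type} [Field F] [Fintype F]

lemma monic_of_mem_nf {f P : Polynomial F} (hP : P ∈ normalizedFactors f) : P.Monic := by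
  have h0 : P ≠ 0 := fun h => zero_notMem_normalizedFactors f (h ▸ hP)
  have := Polynomial.monic_normalize (p := P) h0
  rwa [normalize_normalized_factor P hP] at this

lemma nf_factor_replicate {P : Polynomial F} (hP : P ∈ normalizedFactors (0 : Polynomial F) ∨ Irreducible P) : True := trivial

lemma nf_pow_monic {P : Polynomial F} (hP : Irreducible P) (hPm : P.Monic) (e : ℕ) :
    normalizedFactors (P ^ e) = Multiset.replicate e P := by
  rw [normalizedFactors_pow, normalizedFactors_irreducible hP, hPm.normalize_eq_self,
    Multiset.nsmul_singleton]

lemma pow_dvd_iff_le_count {f P : Polynomial F} (hf : f ≠ 0) (hP : Irreducible P)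
    (hPm : P.Monic) {e : ℕ} (he : 1 ≤ e) :
    P ^ e ∣ f ↔ e ≤ (normalizedFactors f).count P := by
  have hpe : (P : Polynomial F) ^ e ≠ 0 := pow_ne_zero _ hP.ne_zero
  rw [dvd_iff_normalizedFactors_le_normalizedFactors hpe hf, nf_pow_monic hP hPm,
    ← Multiset.le_count_iff_replicate_le]

/-- The key factorization-type computation: removing `P^e` from `f` shrinks its extended type. -/
lemma extType_div {f g P : Polynomial F} (hf : f.Monic) (hP : P ∈ normalizedFactors f)
    {e : ℕ} (he : 1 ≤ e) (hev : e ≤ (normalizedFactors f).count P)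
    (hfg : f = P ^ e * g) :
    extType F g = shrink (P.natDegree, (normalizedFactors f).count P) e (extType F f) := by
  classical
  have hf0 : f ≠ 0 := hf.ne_zero
  have hPirr : Irreducible P := irreducible_of_normalized_factor P hP
  have hPm : P.Monic := monic_of_mem_nf hP
  have hg0 : g ≠ 0 := by rintro rfl; rw [mul_zero] at hfg; exact hf0 hfg
  have hnf : normalizedFactors f = Multiset.replicate e P + normalizedFactors g := by
    rw [hfg, normalizedFactors_mul (pow_ne_zero _ hPirr.ne_zero) hg0, nf_pow_monic hPirr hPm]
  have hcount : ∀ Q : Polynomial F, (normalizedFactors g).count Q =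
      (normalizedFactors f).count Q - (if Q = P then e else 0) := by
    intro Q
    rw [hnf, Multiset.count_add, Multiset.count_replicate]
    by_cases hQP : Q = P
    · subst hQP; simp only [if_pos rfl]; omega
    · rw [if_neg hQP, if_neg (fun h => hQP h.symm)]; omega
  set df := (normalizedFactors f).dedup with hdf
  have hPdf : P ∈ df := Multiset.mem_dedup.mpr hP
  set r := df.erase P with hr
  have hdfr : df = P ::ₘ r := (Multiset.cons_erase hPdf).symm
  have hnodup : df.Nodup := Multiset.nodup_dedup _
  have hrnodup : r.Nodup := hnodup.erase P
  have hPr : P ∉ r := fun h => (Multiset.Nodup.mem_erase_iff hnodup).mp h |>.1 rfl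
  have hmemr : ∀ Q, Q ∈ r ↔ (Q ≠ P ∧ Q ∈ normalizedFactors f) := by
    intro Q
    rw [hr, Multiset.Nodup.mem_erase_iff hnodup, Multiset.mem_dedup]
  set dataf : Polynomial F → ℕ × ℕ :=
    fun Q => (Q.natDegree, (normalizedFactors f).count Q) with hdataf
  set datag : Polynomial F → ℕ × ℕ :=
    fun Q => (Q.natDegree, (normalizedFactors g).count Q) with hdatag
  have hmapr : r.map datag = r.map dataf := by
    apply Multiset.map_congr rfl
    intro Q hQ
    have := hcount Q
    rw [if_neg ((hmemr Q).mp hQ).1] at this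
    simp [hdatag, hdataf, this]
  have hextf : extType F f = dataf P ::ₘ r.map dataf := by
    rw [extType, ← hdf, hdfr, Multiset.map_cons]
  have hcountP : (normalizedFactors g).count P = (normalizedFactors f).count P - e := by
    rw [hcount P, if_pos rfl]
  by_cases hv : (normalizedFactors f).count P = e
  · -- P disappears
    have hdg : (normalizedFactors g).dedup = r := by
      rw [Multiset.Nodup.ext (Multiset.nodup_dedup _) hrnodup]
      intro Q
      rw [Multiset.mem_dedup, hmemr, ← Multiset.count_pos, hcount Q]
      have hQf := Multiset.count_pos (a := Q) (s := normalizedFactors f)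
      split_ifs with hQP
      · subst hQP; rw [hv]; simp
      · constructor
        · intro h; exact ⟨hQP, hQf.mp (by omega)⟩
        · intro ⟨_, h⟩; have := hQf.mpr h; omega
    have : extType F g = r.map dataf := by rw [extType, hdg, hmapr]
    rw [this, hextf, shrink, if_pos]
    · simp only [hdataf]
      rw [Multiset.erase_cons_head]
    · exact hv
  · -- multiplicity drops to count - e > 0
    have hvgt : e < (normalizedFactors f).count P := lt_of_le_of_ne hev (fun h => hv h.symm)
    have hdg : (normalizedFactors g).dedup = df := by
      rw [Multiset.Nodup.ext (Multiset.nodup_dedup _) hnodup]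
      intro Q
      rw [Multiset.mem_dedup, hdf, Multiset.mem_dedup, ← Multiset.count_pos, hcount Q,
        ← Multiset.count_pos]
      split_ifs with hQP
      · subst hQP; omega
      · omega
    have : extType F g = datag P ::ₘ r.map dataf := by
      rw [extType, hdg, hdfr, Multiset.map_cons, hmapr]
    rw [this, hextf, shrink, if_neg]
    · simp only [hdatag, hdataf, hcountP]
      rw [Multiset.erase_cons_head]
    · exact hv

/-- The set of monic irreducible factors `P` of `f` of degree `m` with `P^e ∣ f`. -/
def Dset (f : Polynomial F) (m e : ℕ) : Finset (Polynomial F) :=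
  (normalizedFactors f).toFinset.filter
    (fun P => P.natDegree = m ∧ e ≤ (normalizedFactors f).count P)

lemma Dset_spec {f : Polynomial F} (hf : f.Monic) {m e : ℕ} (he : 1 ≤ e) {P : Polynomial F}
    (hP : P ∈ Dset f m e) :
    P ∈ normalizedFactors f ∧ Irreducible P ∧ P.Monic ∧ P.natDegree = m ∧
      e ≤ (normalizedFactors f).count P ∧ f = P ^ e * (f /ₘ P ^ e) ∧ (f /ₘ P ^ e).Monic := by
  rw [Dset, Finset.mem_filter, Multiset.mem_toFinset] at hP
  obtain ⟨hPnf, hdeg, hcnt⟩ := hP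
  have hPirr : Irreducible P := irreducible_of_normalized_factor P hPnf
  have hPm : P.Monic := monic_of_mem_nf hPnf
  have hdvd : P ^ e ∣ f := (pow_dvd_iff_le_count hf.ne_zero hPirr hPm he).mpr hcnt
  obtain ⟨g, hg⟩ := hdvd
  have hq : f /ₘ P ^ e = g := by rw [hg, Polynomial.mul_divByMonic_cancel_left _ (hPm.pow e)]
  have hfact : f = P ^ e * (f /ₘ P ^ e) := by rw [hq, ← hg]
  exact ⟨hPnf, hPirr, hPm, hdeg, hcnt, hfact,
    (hPm.pow e).of_mul_monic_left (hfact ▸ hf)⟩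

lemma conv_iota (m e : ℕ) (he : 1 ≤ e) (ψ : Polynomial F → ℂ) {f : Polynomial F}
    (hf : f.Monic) :
    conv F (iota F m e) ψ f = ∑ P ∈ Dset f m e, ψ (f /ₘ P ^ e) := by
  classical
  have hf0 : f ≠ 0 := hf.ne_zero
  set Φ : Polynomial F × Polynomial F → ℂ := fun p =>
    if p.1.Monic ∧ p.2.Monic ∧ p.1 * p.2 = f then iota F m e p.1 * ψ p.2 else 0 with hΦ
  have hconv : conv F (iota F m e) ψ f = ∑ᶠ p : Polynomial F × Polynomial F, Φ p := rfl
  have hsupp : Function.support Φ ⊆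
      ↑((Dset f m e).image fun P => (P ^ e, f /ₘ P ^ e)) := by
    intro p hp
    simp only [Function.mem_support, hΦ] at hp
    split_ifs at hp with hcond
    · obtain ⟨h1, h2, h3⟩ := hcond
      have hiota : iota F m e p.1 ≠ 0 := fun h => hp (by rw [h, zero_mul])
      rw [iota] at hiota
      split_ifs at hiota with hex
      · obtain ⟨P, hPirr, hPm, hPdeg, hp1⟩ := hex
        have hdvd : P ^ e ∣ f := ⟨p.2, by rw [← h3, hp1]⟩
        have hcnt : e ≤ (normalizedFactors f).count P :=
          (pow_dvd_iff_le_count hf0 hPirr hPm he).mp hdvd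
        have hPnf : P ∈ normalizedFactors f := by
          rw [← Multiset.count_pos]; omega
        have hp2 : p.2 = f /ₘ P ^ e := by
          rw [← h3, hp1, Polynomial.mul_divByMonic_cancel_left _ (hPm.pow e)]
        simp only [Finset.coe_image, Set.mem_image, Finset.mem_coe]
        refine ⟨P, ?_, ?_⟩
        · rw [Dset, Finset.mem_filter, Multiset.mem_toFinset]
          exact ⟨hPnf, hPdeg, hcnt⟩
        · exact (Prod.ext hp1 hp2).symm
      · exact absurd rfl hiota
    · exact absurd rfl hp
  rw [hconv, finsum_eq_sum_of_support_subset Φ hsupp, Finset.sum_image, Finset.sum_congr rfl]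
  · intro P hP
    obtain ⟨hPnf, hPirr, hPm, hPdeg, hcnt, hfact, hqm⟩ := Dset_spec hf he hP
    simp only [hΦ]
    rw [if_pos ⟨hPm.pow e, hqm, hfact.symm⟩, iota, if_pos ⟨P, hPirr, hPm, hPdeg, rfl⟩, one_mul]
  · intro P hP Q hQ hPQ
    obtain ⟨hPnf, hPirr, hPm, _, _, _, _⟩ := Dset_spec hf he hP
    obtain ⟨hQnf, hQirr, hQm, _, _, _, _⟩ := Dset_spec hf he hQ
    have hpow : P ^ e = Q ^ e := (Prod.mk.injEq _ _ _ _ ▸ hPQ).1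
    have hdvd : P ∣ Q := (prime_of_normalized_factor P hPnf).dvd_of_dvd_pow
      (hpow ▸ dvd_pow_self P (Nat.one_le_iff_ne_zero.mp he))
    exact Polynomial.eq_of_monic_of_associated hPm hQm (hPirr.associated_of_dvd hQirr hdvd)

lemma extType_eq_zero_iff {f : Polynomial F} (hf : f.Monic) : extType F f = 0 ↔ f = 1 := by
  rw [extType, Multiset.map_eq_zero, Multiset.dedup_eq_zero]
  constructor
  · intro h
    have := prod_normalizedFactors hf.ne_zero
    rw [h, Multiset.prod_zero] at this
    exact hf.eq_one_of_isUnit (associated_one_iff_isUnit.mp this.symm)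
  · rintro rfl
    exact normalizedFactors_one

lemma iotaL_eq : ∀ (L : List (ℕ × ℕ)), (∀ me ∈ L, 1 ≤ me.2) → ∀ {f : Polynomial F}, f.Monic →
    iotaL F L f = (NN L (extType F f) : ℂ)
  | [], _, f, hf => by
    simp only [iotaL, NN]
    by_cases h : f = 1
    · rw [if_pos h, if_pos ((extType_eq_zero_iff hf).mpr h), Nat.cast_one]
    · rw [if_neg h, if_neg (fun h0 => h ((extType_eq_zero_iff hf).mp h0)), Nat.cast_zero]
  | me :: L, hL, f, hf => by
    have he : 1 ≤ me.2 := hL me List.mem_cons_self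
    have hL' : ∀ x ∈ L, 1 ≤ x.2 := fun x hx => hL x (List.mem_cons_of_mem _ hx)
    set t := extType F f with ht
    set dataf : Polynomial F → ℕ × ℕ :=
      fun Q => (Q.natDegree, (normalizedFactors f).count Q) with hdataf
    have hstep : iotaL F (me :: L) f =
        ∑ P ∈ Dset f me.1 me.2, (NN L (shrink (dataf P) me.2 t) : ℂ) := by
      show conv F (iota F me.1 me.2) (iotaL F L) f = _
      rw [conv_iota me.1 me.2 he _ hf]
      refine Finset.sum_congr rfl (fun P hP => ?_)
      obtain ⟨hPnf, hPirr, hPm, hPdeg, hcnt, hfact, hqm⟩ := Dset_spec hf he hP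
      rw [iotaL_eq L hL' hqm, extType_div hf hPnf he hcnt hfact]
    have hmaps : ∀ P ∈ Dset f me.1 me.2, dataf P ∈ t.toFinset := by
      intro P hP
      rw [Dset, Finset.mem_filter, Multiset.mem_toFinset] at hP
      rw [Multiset.mem_toFinset, ht, extType, Multiset.mem_map]
      exact ⟨P, Multiset.mem_dedup.mpr hP.1, rfl⟩
    rw [hstep, ← Finset.sum_fiberwise_of_maps_to' hmaps
      (fun x => (NN L (shrink x me.2 t) : ℂ))]
    have hNN : (NN (me :: L) t : ℂ) = ∑ x ∈ t.toFinset,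
        if x.1 = me.1 ∧ me.2 ≤ x.2 then (t.count x : ℂ) * (NN L (shrink x me.2 t) : ℂ)
        else 0 := by
      simp only [NN, Nat.cast_sum]
      refine Finset.sum_congr rfl (fun x _ => ?_)
      split_ifs <;> push_cast <;> ring
    rw [hNN]
    refine Finset.sum_congr rfl (fun x hxt => ?_)
    rw [Finset.sum_const]
    by_cases hcond : x.1 = me.1 ∧ me.2 ≤ x.2
    · rw [if_pos hcond]
      have hfil : (Dset f me.1 me.2).filter (fun P => dataf P = x) =
          (normalizedFactors f).toFinset.filter (fun P => dataf P = x) := by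
        apply Finset.ext
        intro P
        simp only [Dset, Finset.mem_filter, Multiset.mem_toFinset]
        constructor
        · rintro ⟨⟨h1, _, _⟩, h4⟩; exact ⟨h1, h4⟩
        · rintro ⟨h1, h4⟩
          refine ⟨⟨h1, ?_, ?_⟩, h4⟩
          · rw [show P.natDegree = (dataf P).1 from rfl, h4]; exact hcond.1
          · rw [show (normalizedFactors f).count P = (dataf P).2 from rfl, h4]
            exact hcond.2
      have hcard : ((normalizedFactors f).toFinset.filter (fun P => dataf P = x)).card =
          t.count x := by
        rw [ht, extType, Multiset.count_map, Finset.card_def, Finset.filter_val,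
          Multiset.toFinset_val]
        exact congrArg Multiset.card (Multiset.filter_congr (fun a _ => eq_comm))
      rw [hfil, hcard]
      simp [mul_comm]
    · rw [if_neg hcond]
      have : (Dset f me.1 me.2).filter (fun P => dataf P = x) = ∅ := by
        apply Finset.filter_eq_empty_iff.mpr
        intro P hP h4
        rw [Dset, Finset.mem_filter] at hP
        exact hcond ⟨by rw [← h4]; exact hP.2.1, by rw [← h4]; exact hP.2.2⟩
      rw [this]
      simp

lemma extType_valid {f : Polynomial F} (hf : f ≠ 0) {x : ℕ × ℕ} (hx : x ∈ extType F f) :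
    1 ≤ x.1 ∧ 1 ≤ x.2 := by
  rw [extType, Multiset.mem_map] at hx
  obtain ⟨P, hP, rfl⟩ := hx
  rw [Multiset.mem_dedup] at hP
  exact ⟨(irreducible_of_normalized_factor P hP).natDegree_pos,
    Multiset.count_pos.mpr hP⟩

end PolyAux

lemma card_le_totalDeg : ∀ {t : Multiset (ℕ × ℕ)}, (∀ x ∈ t, 1 ≤ x.1 ∧ 1 ≤ x.2) →
    Multiset.card t ≤ totalDeg t := by
  intro t
  induction t using Multiset.induction_on with
  | empty => simp [totalDeg]
  | cons a s ih =>
    intro hv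
    rw [totalDeg_cons, Multiset.card_cons]
    have h1 := hv a (Multiset.mem_cons_self _ _)
    have h2 := ih (fun x hx => hv x (Multiset.mem_cons_of_mem hx))
    have h3 : 1 ≤ a.1 * a.2 := Nat.one_le_iff_ne_zero.mpr (Nat.mul_ne_zero
      (by omega) (by omega))
    omega

/-- The finite set of extended factorization types of total degree `n`. -/
def Tset (n : ℕ) : Finset (Multiset (ℕ × ℕ)) :=
  ((n • ((Finset.Icc 1 n ×ˢ Finset.Icc 1 n : Finset (ℕ × ℕ))).val).powerset.toFinset).filter
    (fun t => totalDeg t = n ∧ ∀ x ∈ t, 1 ≤ x.1 ∧ 1 ≤ x.2)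

lemma Tset_spec {n : ℕ} {t : Multiset (ℕ × ℕ)} (h : t ∈ Tset n) :
    totalDeg t = n ∧ ∀ x ∈ t, 1 ≤ x.1 ∧ 1 ≤ x.2 := (Finset.mem_filter.mp h).2

lemma mem_Tset_of {n : ℕ} {t : Multiset (ℕ × ℕ)} (h1 : totalDeg t = n)
    (h2 : ∀ x ∈ t, 1 ≤ x.1 ∧ 1 ≤ x.2) : t ∈ Tset n := by
  rw [Tset, Finset.mem_filter]
  refine ⟨?_, h1, h2⟩
  rw [Multiset.mem_toFinset, Multiset.mem_powerset, Multiset.le_iff_count]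
  intro x
  by_cases hx : x ∈ t
  · rw [Multiset.count_nsmul]
    have hx1 := h2 x hx
    have hle : x.1 * x.2 ≤ totalDeg t :=
      Multiset.single_le_sum (fun y hy => Nat.zero_le y) _
        (Multiset.mem_map_of_mem _ hx)
    have hxS : x ∈ (Finset.Icc 1 n ×ˢ Finset.Icc 1 n : Finset (ℕ × ℕ)) := by
      rw [Finset.mem_product, Finset.mem_Icc, Finset.mem_Icc]
      have ha : x.1 ≤ x.1 * x.2 := Nat.le_mul_of_pos_right x.1 (by omega)
      have hb : x.2 ≤ x.1 * x.2 := Nat.le_mul_of_pos_left x.2 (by omega)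
      omega
    rw [Multiset.count_eq_one_of_mem (Finset.Icc 1 n ×ˢ Finset.Icc 1 n).nodup hxS]
    have hc : Multiset.count x t ≤ Multiset.card t := Multiset.count_le_card x t
    have hd : Multiset.card t ≤ totalDeg t := card_le_totalDeg h2
    omega
  · rw [Multiset.count_eq_zero_of_notMem hx]
    exact Nat.zero_le _

lemma toList_mulsum (t : Multiset (ℕ × ℕ)) :
    ((t.toList.map fun p : ℕ × ℕ => p.1 * p.2)).sum = totalDeg t := by
  rw [totalDeg]
  conv_rhs => rw [← Multiset.coe_toList t]
  rw [Multiset.map_coe, Multiset.sum_coe]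

lemma exists_inverse (n : ℕ) :
    ∃ C : Multiset (ℕ × ℕ) → List (ℕ × ℕ) → ℂ,
      ∀ t ∈ Tset n, ∀ t' ∈ Tset n,
        ∑ L ∈ (Tset n).image Multiset.toList, C t L * (NN L t' : ℂ) =
          if t' = t then 1 else 0 := by
  suffices h : ∀ k : ℕ, ∃ C : Multiset (ℕ × ℕ) → List (ℕ × ℕ) → ℂ,
      ∀ t ∈ Tset n, Multiset.card t < k → ∀ t' ∈ Tset n,
        ∑ L ∈ (Tset n).image Multiset.toList, C t L * (NN L t' : ℂ) =
          if t' = t then 1 else 0 by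
    obtain ⟨C, hC⟩ := h (n + 1)
    refine ⟨C, fun t ht t' ht' => hC t ht ?_ t' ht'⟩
    have h1 := card_le_totalDeg (Tset_spec ht).2
    rw [(Tset_spec ht).1] at h1
    omega
  intro k
  induction k with
  | zero => exact ⟨fun _ _ => 0, fun t _ h => absurd h (Nat.not_lt_zero _)⟩
  | succ k ih =>
    obtain ⟨C, hC⟩ := ih
    refine ⟨fun u L => if Multiset.card u = k then
        ((NN u.toList u : ℂ))⁻¹ * ((if L = u.toList then 1 else 0) -
          ∑ t'' ∈ (Tset n).filter (fun v => Multiset.card v < k),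
            (NN u.toList t'' : ℂ) * C t'' L)
      else C u L, ?_⟩
    intro t ht htk t' ht'
    by_cases hk : Multiset.card t = k
    case neg =>
      simp only [if_neg hk]
      exact hC t ht (by omega) t' ht'
    case pos =>
      simp only [if_pos hk]
      have hNt : (NN t.toList t : ℂ) ≠ 0 := by
        have h1 := NN_self_pos t.toList
        rw [Multiset.coe_toList] at h1
        exact_mod_cast h1.ne'
      have hlen : t.toList.length = k := by rw [Multiset.length_toList, hk]
      have htlS : t.toList ∈ (Tset n).image Multiset.toList :=
        Finset.mem_image_of_mem _ ht
      have step1 : ∑ L ∈ (Tset n).image Multiset.toList,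
          ((NN t.toList t : ℂ))⁻¹ * ((if L = t.toList then 1 else 0) -
            ∑ t'' ∈ (Tset n).filter (fun v => Multiset.card v < k),
              (NN t.toList t'' : ℂ) * C t'' L) * (NN L t' : ℂ)
          = ((NN t.toList t : ℂ))⁻¹ * ((NN t.toList t' : ℂ) -
              ∑ t'' ∈ (Tset n).filter (fun v => Multiset.card v < k),
                (NN t.toList t'' : ℂ) *
                  (∑ L ∈ (Tset n).image Multiset.toList, C t'' L * (NN L t' : ℂ))) := by
        have e1 : ∀ L ∈ (Tset n).image Multiset.toList,
            ((NN t.toList t : ℂ))⁻¹ * ((if L = t.toList then 1 else 0) -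
              ∑ t'' ∈ (Tset n).filter (fun v => Multiset.card v < k),
                (NN t.toList t'' : ℂ) * C t'' L) * (NN L t' : ℂ)
            = ((NN t.toList t : ℂ))⁻¹ *
              ((if L = t.toList then (NN L t' : ℂ) else 0) -
                ∑ t'' ∈ (Tset n).filter (fun v => Multiset.card v < k),
                  (NN t.toList t'' : ℂ) * (C t'' L * (NN L t' : ℂ))) := by
          intro L _
          rw [mul_assoc, sub_mul, ite_mul, one_mul, zero_mul, Finset.sum_mul]
          congr 2
          exact Finset.sum_congr rfl (fun u _ => by ring)
        rw [Finset.sum_congr rfl e1, ← Finset.mul_sum, Finset.sum_sub_distrib]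
        congr 2
        · rw [Finset.sum_ite_eq' _ t.toList (fun L => (NN L t' : ℂ)), if_pos htlS]
        · rw [Finset.sum_comm]
          exact Finset.sum_congr rfl (fun u _ => by rw [← Finset.mul_sum])
      rw [step1]
      have step2 : ∀ t'' ∈ (Tset n).filter (fun v => Multiset.card v < k),
          (NN t.toList t'' : ℂ) *
            (∑ L ∈ (Tset n).image Multiset.toList, C t'' L * (NN L t' : ℂ))
          = (NN t.toList t'' : ℂ) * (if t' = t'' then 1 else 0) := by
        intro t'' ht''
        rw [Finset.mem_filter] at ht''
        rw [hC t'' ht''.1 ht''.2 t' ht']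
      rw [Finset.sum_congr rfl step2]
      simp only [mul_ite, mul_one, mul_zero]
      rw [Finset.sum_ite_eq _ t' (fun u => (NN t.toList u : ℂ))]
      by_cases htt : t' = t
      · subst htt
        have hnot : t' ∉ Finset.filter (fun v => Multiset.card v < k) (Tset n) :=
          fun h => absurd (Finset.mem_filter.mp h).2 (by omega)
        rw [if_neg hnot, sub_zero, inv_mul_cancel₀ hNt, if_pos rfl]
      · rw [if_neg htt]
        by_cases hsm : Multiset.card t' < k
        · rw [if_pos (Finset.mem_filter.mpr ⟨ht', hsm⟩), sub_self, mul_zero]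
        · have hnot : t' ∉ Finset.filter (fun v => Multiset.card v < k) (Tset n) :=
            fun h => hsm (Finset.mem_filter.mp h).2
          rw [if_neg hnot]
          have hzero : NN t.toList t' = 0 := by
            by_contra hne
            have hc1 := NN_card_le _ _ hne
            rw [hlen] at hc1
            have hc2 : Multiset.card t' = t.toList.length := by rw [hlen]; omega
            have := NN_eq_of_card _ _ hne hc2
            rw [Multiset.coe_toList] at this
            exact htt this
          rw [hzero, Nat.cast_zero, sub_zero, mul_zero]


/-- **A basis for factorization functions** (Proposition 6.1): every factorization function
supported on monic polynomials of degree `n` is a linear combination, with coefficients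
independent of `q`, of the functions `ι_{(𝐦,𝐞)}` with `m₁e₁ + ⋯ + m_ℓe_ℓ = n`. -/
theorem statement13 (n : ℕ) (hn : 1 ≤ n) (a : Multiset (ℕ × ℕ) → ℂ)
    (ha : ∀ t, totalDeg t ≠ n → a t = 0) :
    ∃ (s : Finset (List (ℕ × ℕ))) (c : List (ℕ × ℕ) → ℂ),
      (∀ L ∈ s, (L.map fun p : ℕ × ℕ => p.1 * p.2).sum = n) ∧
      ∀ (F : Type) [Field F] [Fintype F], ∀ f : Polynomial F, f.Monic →
        a (extType F f) = ∑ L ∈ s, c L * iotaL F L f := by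
  classical
  obtain ⟨C, hC⟩ := exists_inverse n
  refine ⟨(Tset n).image Multiset.toList, fun L => ∑ t ∈ Tset n, a t * C t L, ?_, ?_⟩
  · intro L hL
    obtain ⟨t, ht, rfl⟩ := Finset.mem_image.mp hL
    rw [toList_mulsum, (Tset_spec ht).1]
  · intro F _ _ f hf
    have hrw : ∀ L ∈ (Tset n).image Multiset.toList,
        iotaL F L f = (NN L (extType F f) : ℂ) := by
      intro L hL
      obtain ⟨u, hu, rfl⟩ := Finset.mem_image.mp hL
      refine iotaL_eq u.toList ?_ hf
      intro me hme
      have hme' : me ∈ u := by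
        rw [← Multiset.mem_coe, Multiset.coe_toList] at hme; exact hme
      exact ((Tset_spec hu).2 me hme').2
    by_cases hdeg : totalDeg (extType F f) = n
    · have ht0T : extType F f ∈ Tset n :=
        mem_Tset_of hdeg (fun x hx => extType_valid hf.ne_zero hx)
      have key : ∑ L ∈ (Tset n).image Multiset.toList,
          (∑ t ∈ Tset n, a t * C t L) * iotaL F L f = a (extType F f) := by
        calc ∑ L ∈ (Tset n).image Multiset.toList,
              (∑ t ∈ Tset n, a t * C t L) * iotaL F L f
            = ∑ L ∈ (Tset n).image Multiset.toList,
              ∑ t ∈ Tset n, a t * (C t L * (NN L (extType F f) : ℂ)) := by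
              refine Finset.sum_congr rfl (fun L hL => ?_)
              rw [hrw L hL, Finset.sum_mul]
              exact Finset.sum_congr rfl (fun u _ => by ring)
          _ = ∑ t ∈ Tset n, a t *
              ∑ L ∈ (Tset n).image Multiset.toList, C t L * (NN L (extType F f) : ℂ) := by
              rw [Finset.sum_comm]
              exact Finset.sum_congr rfl (fun u _ => by rw [← Finset.mul_sum])
          _ = ∑ t ∈ Tset n, a t * (if extType F f = t then 1 else 0) := by
              exact Finset.sum_congr rfl (fun u hu => by rw [hC u hu (extType F f) ht0T])
          _ = a (extType F f) := by
              simp only [mul_ite, mul_one, mul_zero]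
              rw [Finset.sum_ite_eq _ (extType F f) (fun u => a u), if_pos ht0T]
      rw [← key]
    · rw [ha _ hdeg]
      symm
      apply Finset.sum_eq_zero
      intro L hL
      rw [hrw L hL]
      obtain ⟨u, hu, rfl⟩ := Finset.mem_image.mp hL
      have hzero : NN u.toList (extType F f) = 0 := by
        by_contra hne
        have h1 := NN_totalDeg _ _ hne
        rw [toList_mulsum, (Tset_spec hu).1] at h1
        exact hdeg h1
      rw [hzero, Nat.cast_zero, mul_zero]

end PaperFF
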